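/- arXiv:2402.15912 — 2 statements merged into one kernel-verified Lean document; each statement's English description precedes it below -/
import Mathlib

section
/- (Lemma 2) Let ρ_SA be a bipartite density matrix on ℂ^{d_S} ⊗ ℂ^{d_A} and let {|r_k⟩} be a fixed orthonormal basis of ℂ^{d_S}. If for every orthonormal basis {|a⟩} of ℂ^{d_A} and every outcome a with p_a > 0 the conditional state ρ_{S|a} is diagonal with respect to the basis {|r_k⟩}, then ρ_SA = Σ_k |r_k⟩⟨r_k| ⊗ C^A_k, where each C^A_k is a positive semidefinite matrix on ℂ^{d_A}. -/
open Matrix BigOperators Finset Kronecker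
open scoped ComplexOrder

noncomputable section

namespace Daemonic

/-- The outer product `|x⟩⟨y|` as a matrix. -/
def ketbra {ι : Type*} [Fintype ι] (x y : ι → ℂ) : Matrix ι ι ℂ :=
  Matrix.vecMulVec x (star y)

/-- A family of vectors is orthonormal. -/
def ONFam {ι κ : Type*} [Fintype ι] [DecidableEq κ] (v : κ → ι → ℂ) : Prop :=
  ∀ i j, star (v i) ⬝ᵥ v j = if i = j then 1 else 0

/-- A density matrix: positive semidefinite with unit trace. -/
def IsDensity {ι : Type*} [Fintype ι] (ρ : Matrix ι ι ℂ) : Prop :=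
  ρ.PosSemidef ∧ ρ.trace = 1

/-- The matrix element `⟨x|M|y⟩`. -/
def matElem {ι : Type*} [Fintype ι] (M : Matrix ι ι ℂ) (x y : ι → ℂ) : ℂ :=
  star x ⬝ᵥ (M *ᵥ y)

/-- The Hamiltonian `H_S = ∑ₖ εₖ |εₖ⟩⟨εₖ|`. -/
def ham {n : ℕ} (ε : Fin n → ℝ) (v : Fin n → Fin n → ℂ) : Matrix (Fin n) (Fin n) ℂ :=
  ∑ k, (ε k : ℂ) • ketbra (v k) (v k)

/-- `e^{t H_S} = ∑ₖ e^{t εₖ} |εₖ⟩⟨εₖ|` (functional calculus in the eigenbasis of `H_S`). -/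
def expHam {n : ℕ} (ε : Fin n → ℝ) (v : Fin n → Fin n → ℂ) (t : ℝ) :
    Matrix (Fin n) (Fin n) ℂ :=
  ∑ k, (Real.exp (t * ε k) : ℂ) • ketbra (v k) (v k)

/-- The expected utility `⟨u(w)⟩_{ρ,U}` for quasiprobability parameter `q`,
with respect to the eigenvalues `ε` and orthonormal eigenvectors `v` of `H_S`. -/
def expUtil {n : ℕ} (u : ℝ → ℝ) (q : ℝ) (ε : Fin n → ℝ) (v : Fin n → Fin n → ℂ)
    (ρ U : Matrix (Fin n) (Fin n) ℂ) : ℝ :=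
  ∑ i, ∑ j, ∑ k,
    (matElem ρ (v i) (v j) * matElem Uᴴ (v j) (v k) * matElem U (v k) (v i)).re *
      u (q * ε i + (1 - q) * ε j - ε k)

/-- The optimal expected utility `𝓤(ρ) = max over unitaries U of ⟨u(w)⟩_{ρ,U}`. -/
def optUtil {n : ℕ} (u : ℝ → ℝ) (q : ℝ) (ε : Fin n → ℝ) (v : Fin n → Fin n → ℂ)
    (ρ : Matrix (Fin n) (Fin n) ℂ) : ℝ :=
  ⨆ U : Matrix.unitaryGroup (Fin n) ℂ, expUtil u q ε v ρ (U : Matrix (Fin n) (Fin n) ℂ)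

/-- The exponential utility `u(w) = (1 - e^{-r w})/r`. -/
def expUtility (r : ℝ) : ℝ → ℝ := fun w => (1 - Real.exp (-r * w)) / r

/-- The partial trace over the ancilla. -/
def ptraceA {dS dA : ℕ} (ρSA : Matrix (Fin dS × Fin dA) (Fin dS × Fin dA) ℂ) :
    Matrix (Fin dS) (Fin dS) ℂ :=
  Matrix.of fun i j => ∑ a, ρSA (i, a) (j, a)

/-- The unnormalized conditional state `Tr_A((I ⊗ Π_a) ρ_SA (I ⊗ Π_a))`, where
`Π_a = |a⟩⟨a|` projects onto the vector `w a` of an orthonormal basis `w` of the ancilla. -/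
def condUnnorm {dS dA : ℕ} (w : Fin dA → Fin dA → ℂ)
    (ρSA : Matrix (Fin dS × Fin dA) (Fin dS × Fin dA) ℂ) (a : Fin dA) :
    Matrix (Fin dS) (Fin dS) ℂ :=
  Matrix.of fun i j => ∑ c, ∑ d, ρSA (i, c) (j, d) * (w a d * star (w a c))

/-- The outcome probability `p_a = Tr((I ⊗ Π_a) ρ_SA)`. -/
def prob {dS dA : ℕ} (w : Fin dA → Fin dA → ℂ)
    (ρSA : Matrix (Fin dS × Fin dA) (Fin dS × Fin dA) ℂ) (a : Fin dA) : ℝ :=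
  ((condUnnorm w ρSA a).trace).re

/-- The conditional state `ρ_{S|a}`. -/
def condState {dS dA : ℕ} (w : Fin dA → Fin dA → ℂ)
    (ρSA : Matrix (Fin dS × Fin dA) (Fin dS × Fin dA) ℂ) (a : Fin dA) :
    Matrix (Fin dS) (Fin dS) ℂ :=
  ((prob w ρSA a : ℂ))⁻¹ • condUnnorm w ρSA a

/-- The daemonic expected utility `𝓤_{{Π_a}}(ρ_SA) = ∑_a p_a 𝓤(ρ_{S|a})`. -/
def daemonicUtil {dS dA : ℕ} (u : ℝ → ℝ) (q : ℝ) (ε : Fin dS → ℝ)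
    (v : Fin dS → Fin dS → ℂ) (w : Fin dA → Fin dA → ℂ)
    (ρSA : Matrix (Fin dS × Fin dA) (Fin dS × Fin dA) ℂ) : ℝ :=
  ∑ a, prob w ρSA a * optUtil u q ε v (condState w ρSA a)

/-- The maximum daemonic gain `δ𝓤(ρ_SA)`, maximizing over all orthonormal bases of the
ancilla (equivalently, over the rows of all unitary matrices). -/
def daemonicGain {dS dA : ℕ} (u : ℝ → ℝ) (q : ℝ) (ε : Fin dS → ℝ)
    (v : Fin dS → Fin dS → ℂ)
    (ρSA : Matrix (Fin dS × Fin dA) (Fin dS × Fin dA) ℂ) : ℝ :=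
  (⨆ V : Matrix.unitaryGroup (Fin dA) ℂ,
      daemonicUtil u q ε v (fun a => (V : Matrix (Fin dA) (Fin dA) ℂ) a) ρSA) -
    optUtil u q ε v (ptraceA ρSA)

/-- The ergotropy of a (possibly unnormalized) state `σ` with respect to a Hamiltonian `H`:
`ℰ_H(σ) = max over unitaries U of (Tr(Hσ) - Tr(H U σ U†))`. -/
def ergotropyH {n : ℕ} (H σ : Matrix (Fin n) (Fin n) ℂ) : ℝ :=
  ⨆ U : Matrix.unitaryGroup (Fin n) ℂ,
    ((H * σ).trace -
      (H * ((U : Matrix (Fin n) (Fin n) ℂ) * σ * (U : Matrix (Fin n) (Fin n) ℂ)ᴴ)).trace).re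

/-- A separable bipartite state: a convex combination of product states. -/
def IsSeparable {dS dA : ℕ} (ρSA : Matrix (Fin dS × Fin dA) (Fin dS × Fin dA) ℂ) : Prop :=
  ∃ (m : ℕ) (p : Fin m → ℝ) (σ : Fin m → Matrix (Fin dS) (Fin dS) ℂ)
    (τ : Fin m → Matrix (Fin dA) (Fin dA) ℂ),
    (∀ k, 0 ≤ p k) ∧ (∑ k, p k = 1) ∧ (∀ k, IsDensity (σ k)) ∧ (∀ k, IsDensity (τ k)) ∧
    ρSA = ∑ k, (p k : ℂ) • (σ k ⊗ₖ τ k)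

/-- A classical-quantum state `ρ_SA = ∑ₖ pₖ Pₖ ⊗ ρᴬₖ` with `Pₖ` mutually orthogonal
rank-one projectors summing to the identity. -/
def IsClassicalQuantum {dS dA : ℕ}
    (ρSA : Matrix (Fin dS × Fin dA) (Fin dS × Fin dA) ℂ) : Prop :=
  ∃ (p : Fin dS → ℝ) (ψ : Fin dS → Fin dS → ℂ) (τ : Fin dS → Matrix (Fin dA) (Fin dA) ℂ),
    (∀ k, 0 ≤ p k) ∧ (∑ k, p k = 1) ∧ ONFam ψ ∧ (∀ k, IsDensity (τ k)) ∧
    ρSA = ∑ k, (p k : ℂ) • (ketbra (ψ k) (ψ k) ⊗ₖ τ k)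

/-- The dephasing map associated with an orthonormal basis `v`. -/
def dephase {n : ℕ} (v : Fin n → Fin n → ℂ) (ρ : Matrix (Fin n) (Fin n) ℂ) :
    Matrix (Fin n) (Fin n) ℂ :=
  ∑ k, ketbra (v k) (v k) * ρ * ketbra (v k) (v k)


/-! ### Auxiliary machinery for `stmt2` -/

/-- elementary tensor of vectors -/
def tens {dS dA : ℕ} (x : Fin dS → ℂ) (y : Fin dA → ℂ) : Fin dS × Fin dA → ℂ :=
  fun p => x p.1 * y p.2

lemma sum4_reorder {ι₁ ι₂ ι₃ ι₄ M : Type*} [Fintype ι₁] [Fintype ι₂] [Fintype ι₃] [Fintype ι₄]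
    [AddCommMonoid M] (f : ι₁ → ι₂ → ι₃ → ι₄ → M) :
    ∑ s, ∑ c, ∑ t, ∑ d, f s c t d = ∑ c, ∑ d, ∑ s, ∑ t, f s c t d :=
  calc ∑ s, ∑ c, ∑ t, ∑ d, f s c t d
      = ∑ c, ∑ s, ∑ t, ∑ d, f s c t d := Finset.sum_comm
    _ = ∑ c, ∑ s, ∑ d, ∑ t, f s c t d :=
        Finset.sum_congr rfl fun _ _ => Finset.sum_congr rfl fun _ _ => Finset.sum_comm
    _ = ∑ c, ∑ d, ∑ s, ∑ t, f s c t d :=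
        Finset.sum_congr rfl fun _ _ => Finset.sum_comm

lemma sum4_reorder' {ι₁ ι₂ ι₃ ι₄ M : Type*} [Fintype ι₁] [Fintype ι₂] [Fintype ι₃] [Fintype ι₄]
    [AddCommMonoid M] (f : ι₁ → ι₂ → ι₃ → ι₄ → M) :
    ∑ s, ∑ t, ∑ c, ∑ d, f s t c d = ∑ c, ∑ d, ∑ s, ∑ t, f s t c d :=
  calc ∑ s, ∑ t, ∑ c, ∑ d, f s t c d
      = ∑ s, ∑ c, ∑ t, ∑ d, f s t c d :=
        Finset.sum_congr rfl fun _ _ => Finset.sum_comm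
    _ = ∑ c, ∑ d, ∑ s, ∑ t, f s t c d := sum4_reorder _

lemma dot_tens {dS dA : ℕ} (ρ : Matrix (Fin dS × Fin dA) (Fin dS × Fin dA) ℂ)
    (p : Fin dS → ℂ) (x : Fin dA → ℂ) (q : Fin dS → ℂ) (y : Fin dA → ℂ) :
    star (tens p x) ⬝ᵥ (ρ *ᵥ tens q y) =
      ∑ c, ∑ d, star (x c) * y d * (∑ s, ∑ t, star (p s) * ρ (s, c) (t, d) * q t) := by
  simp only [dotProduct, mulVec, tens, Pi.star_apply, star_mul', Fintype.sum_prod_type,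
    Finset.mul_sum, Finset.sum_mul]
  rw [sum4_reorder (fun s c t d => star (p s) * star (x c) * (ρ (s,c) (t,d) * (q t * y d)))]
  refine Finset.sum_congr rfl fun c _ => Finset.sum_congr rfl fun d _ => ?_
  refine Finset.sum_congr rfl fun s _ => Finset.sum_congr rfl fun t _ => by ring

lemma onfam_complete {n : ℕ} {v : Fin n → Fin n → ℂ} (h : ONFam v) (s t : Fin n) :
    ∑ k, star (v k s) * v k t = if s = t then 1 else 0 := by
  classical
  let A : Matrix (Fin n) (Fin n) ℂ := Matrix.of fun k s => v k s
  have h1 : A * Aᴴ = 1 := by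
    ext i j
    have hh := h i j
    simp only [dotProduct, Pi.star_apply] at hh
    simp only [Matrix.mul_apply, Matrix.conjTranspose_apply, Matrix.one_apply, A, Matrix.of_apply]
    calc ∑ s, v i s * star (v j s) = star (∑ s, star (v i s) * v j s) := by
          rw [star_sum]; exact Finset.sum_congr rfl fun s _ => by simp [mul_comm]
      _ = if i = j then 1 else 0 := by rw [hh]; split <;> simp
  have h2 : Aᴴ * A = 1 := mul_eq_one_comm.mp h1
  have h3 := congrFun (congrFun h2 s) t
  simpa [Matrix.mul_apply, Matrix.conjTranspose_apply, Matrix.one_apply, A] using h3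

lemma onfam_complete' {n : ℕ} {v : Fin n → Fin n → ℂ} (h : ONFam v) (s t : Fin n) :
    ∑ k, v k s * star (v k t) = if s = t then 1 else 0 := by
  have := congrArg star (onfam_complete h s t)
  rw [star_sum] at this
  calc ∑ k, v k s * star (v k t) = ∑ k, star (star (v k s) * v k t) :=
        Finset.sum_congr rfl fun k _ => by rw [star_mul', star_star, mul_comm]
    _ = if s = t then 1 else 0 := by
        rw [this]; by_cases hst : s = t <;> simp [hst]

lemma tens_single_sum {dS dA : ℕ} (q : Fin dS → ℂ) (u : Fin dA → ℂ) :
    tens q u = ∑ s, q s • tens (Pi.single s 1) u := by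
  funext p
  simp [tens, Pi.single_apply, ite_mul, Finset.sum_ite_eq']

lemma mulVec_tens {dS dA : ℕ} (ρ : Matrix (Fin dS × Fin dA) (Fin dS × Fin dA) ℂ)
    (q : Fin dS → ℂ) (u : Fin dA → ℂ) :
    ρ *ᵥ tens q u = ∑ s, q s • (ρ *ᵥ tens (Pi.single s 1) u) := by
  rw [tens_single_sum q u, ← Matrix.mulVecLin_apply, map_sum]
  exact Finset.sum_congr rfl fun s _ => by rw [_root_.map_smul, Matrix.mulVecLin_apply]

lemma matElem_condUnnorm {dS dA : ℕ} (w : Fin dA → Fin dA → ℂ)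
    (ρ : Matrix (Fin dS × Fin dA) (Fin dS × Fin dA) ℂ) (a : Fin dA) (x y : Fin dS → ℂ) :
    matElem (condUnnorm w ρ a) x y =
      ∑ c, ∑ d, star (w a c) * w a d * (∑ s, ∑ t, star (x s) * ρ (s, c) (t, d) * y t) := by
  simp only [matElem, condUnnorm, dotProduct, mulVec, Matrix.of_apply, Pi.star_apply,
    Finset.mul_sum, Finset.sum_mul]
  rw [sum4_reorder' (fun s t c d => star (x s) * (ρ (s,c) (t,d) * (w a d * star (w a c)) * y t))]
  refine Finset.sum_congr rfl fun c _ => Finset.sum_congr rfl fun d _ => ?_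
  refine Finset.sum_congr rfl fun s _ => Finset.sum_congr rfl fun t _ => by ring

lemma trace_condUnnorm {dS dA : ℕ} (w : Fin dA → Fin dA → ℂ)
    (ρ : Matrix (Fin dS × Fin dA) (Fin dS × Fin dA) ℂ) (a : Fin dA) :
    (condUnnorm w ρ a).trace =
      ∑ s, star (tens (Pi.single s 1) (w a)) ⬝ᵥ (ρ *ᵥ tens (Pi.single s 1) (w a)) := by
  have hcol : ∀ (s : Fin dS) (c d : Fin dA),
      (∑ s', ∑ t, star ((Pi.single s 1 : Fin dS → ℂ) s') * ρ (s', c) (t, d) * (Pi.single s 1 : Fin dS → ℂ) t)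
        = ρ (s, c) (s, d) := by
    intro s c d
    simp [Pi.single_apply, apply_ite (star : ℂ → ℂ), ite_mul, mul_ite,
      Finset.sum_ite_eq', Finset.sum_ite_eq]
  calc (condUnnorm w ρ a).trace
      = ∑ s, ∑ c, ∑ d, ρ (s, c) (s, d) * (w a d * star (w a c)) := by
        simp [Matrix.trace, Matrix.diag, condUnnorm]
    _ = ∑ s, ∑ c, ∑ d, star (w a c) * w a d *
          (∑ s', ∑ t, star ((Pi.single s 1 : Fin dS → ℂ) s') * ρ (s', c) (t, d) * (Pi.single s 1 : Fin dS → ℂ) t) := by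
        refine Finset.sum_congr rfl fun s _ => Finset.sum_congr rfl fun c _ =>
          Finset.sum_congr rfl fun d _ => ?_
        rw [hcol s c d]; ring
    _ = ∑ s, star (tens (Pi.single s 1) (w a)) ⬝ᵥ (ρ *ᵥ tens (Pi.single s 1) (w a)) :=
        Finset.sum_congr rfl fun s _ => (dot_tens ρ _ _ _ _).symm

lemma prob_nonneg {dS dA : ℕ} (w : Fin dA → Fin dA → ℂ)
    {ρ : Matrix (Fin dS × Fin dA) (Fin dS × Fin dA) ℂ} (hρ : ρ.PosSemidef) (a : Fin dA) :
    0 ≤ prob w ρ a := by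
  rw [prob, trace_condUnnorm]
  rw [Complex.re_sum]
  refine Finset.sum_nonneg fun s _ => ?_
  have := hρ.dotProduct_mulVec_nonneg (tens (Pi.single s 1) (w a))
  exact (Complex.nonneg_iff.mp this).1

/-- The key off-diagonal vanishing lemma. -/
lemma offdiag {dS dA : ℕ}
    (ρSA : Matrix (Fin dS × Fin dA) (Fin dS × Fin dA) ℂ) (hρSA : IsDensity ρSA)
    (rk : Fin dS → Fin dS → ℂ)
    (hdiag : ∀ w : Fin dA → Fin dA → ℂ, ONFam w → ∀ a : Fin dA, 0 < prob w ρSA a →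
      ∀ i j : Fin dS, i ≠ j → matElem (condState w ρSA a) (rk i) (rk j) = 0)
    (k l : Fin dS) (hkl : k ≠ l) :
    Matrix.of (fun c d => ∑ s, ∑ t, star (rk k s) * ρSA (s, c) (t, d) * rk l t)
      = (0 : Matrix (Fin dA) (Fin dA) ℂ) := by
  classical
  set G : Matrix (Fin dA) (Fin dA) ℂ :=
    Matrix.of (fun c d => ∑ s, ∑ t, star (rk k s) * ρSA (s, c) (t, d) * rk l t) with hG
  have hq : ∀ v : Fin dA → ℂ, star v ⬝ᵥ (G *ᵥ v) = ∑ c, ∑ d, star (v c) * v d * G c d := by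
    intro v
    simp only [dotProduct, mulVec, Pi.star_apply, Finset.mul_sum]
    exact Finset.sum_congr rfl fun c _ => Finset.sum_congr rfl fun d _ => by ring
  have hGdot : ∀ v : Fin dA → ℂ,
      star (tens (rk k) v) ⬝ᵥ (ρSA *ᵥ tens (rk l) v) = star v ⬝ᵥ (G *ᵥ v) := by
    intro v
    rw [dot_tens, hq]
    exact Finset.sum_congr rfl fun c _ => Finset.sum_congr rfl fun d _ => rfl
  -- quadratic form vanishes everywhere
  have key : ∀ u : Fin dA → ℂ, star u ⬝ᵥ (G *ᵥ u) = 0 := by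
    intro u
    by_cases hu0 : u = 0
    · simp [hu0]
    · have hne : ∃ c, u c ≠ 0 := Function.ne_iff.mp hu0
      obtain ⟨c₀, _⟩ := hne
      have : Nonempty (Fin dA) := ⟨c₀⟩
      -- pass to Euclidean space
      set U : EuclideanSpace ℂ (Fin dA) := (WithLp.equiv 2 (Fin dA → ℂ)).symm u with hU
      have hUne : U ≠ 0 := by
        intro h0
        apply hu0
        have := congrArg (WithLp.equiv 2 (Fin dA → ℂ)) h0
        simpa [hU] using this
      have hnU : ‖U‖ ≠ 0 := norm_ne_zero_iff.mpr hUne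
      set u' : EuclideanSpace ℂ (Fin dA) := ((‖U‖⁻¹ : ℝ) : ℂ) • U with hu'
      have hnu' : ‖u'‖ = 1 := by
        rw [hu', norm_smul]
        simp [hnU]
      -- extend u' to an orthonormal basis
      have horth : Orthonormal ℂ (Set.restrict {c₀} (fun _ : Fin dA => u')) := by
        rw [orthonormal_iff_ite]
        intro i j
        have hij : i = j := Subtype.ext (by
          have hi := i.2; have hj := j.2
          simp only [Set.mem_singleton_iff] at hi hj
          rw [hi, hj])
        subst hij
        simp only [if_pos rfl]
        rw [show ({c₀} : Set (Fin dA)).restrict (fun _ : Fin dA => u') i = u' from rfl, @inner_self_eq_norm_sq_to_K ℂ, hnu']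
        norm_num
      obtain ⟨b, hb⟩ := horth.exists_orthonormalBasis_extension_of_card_eq
        (by simp) 
      set w : Fin dA → Fin dA → ℂ := fun a c => b a c with hw
      have hwON : ONFam w := by
        intro i j
        have := orthonormal_iff_ite.mp b.orthonormal i j
        rw [PiLp.inner_apply] at this
        simpa [dotProduct, Pi.star_apply, RCLike.inner_apply, hw, mul_comm] using this
      have hwc : ∀ c, w c₀ c = u' c := by
        intro c
        have := hb c₀ (Set.mem_singleton c₀)
        rw [hw]
        simp only
        rw [this]
      have hwfun : (fun c => w c₀ c) = fun c => ((‖U‖⁻¹ : ℝ) : ℂ) * u c := by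
        funext c
        rw [hwc c, hu']
        rfl
      -- it suffices to show the quadratic form vanishes at w c₀
      have hscale : u = ((‖U‖ : ℝ) : ℂ) • (fun c => w c₀ c) := by
        rw [hwfun]
        funext c
        simp only [Pi.smul_apply, smul_eq_mul]
        rw [← mul_assoc, ← Complex.ofReal_mul, mul_inv_cancel₀ hnU]
        simp
      have hzero : star (fun c => w c₀ c) ⬝ᵥ (G *ᵥ (fun c => w c₀ c)) = 0 := by
        by_cases hp : 0 < prob w ρSA c₀
        · have h0 := hdiag w hwON c₀ hp k l hkl
          have hcs : matElem (condState w ρSA c₀) (rk k) (rk l) =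
              ((prob w ρSA c₀ : ℂ))⁻¹ * matElem (condUnnorm w ρSA c₀) (rk k) (rk l) := by
            simp [matElem, condState, Matrix.smul_mulVec, dotProduct_smul, smul_eq_mul]
          rw [hcs] at h0
          have hpne : ((prob w ρSA c₀ : ℂ))⁻¹ ≠ 0 := by
            simp only [ne_eq, inv_eq_zero, Complex.ofReal_eq_zero]
            exact ne_of_gt hp
          have hme : matElem (condUnnorm w ρSA c₀) (rk k) (rk l) = 0 :=
            (mul_eq_zero.mp h0).resolve_left hpne
          rw [matElem_condUnnorm] at hme
          rw [hq]
          rw [← hme]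
          rfl
        · -- zero-probability branch: the compressed state vanishes
          have hple : prob w ρSA c₀ ≤ 0 := le_of_not_gt hp
          have hpge : 0 ≤ prob w ρSA c₀ := prob_nonneg w hρSA.1 c₀
          have hp0 : prob w ρSA c₀ = 0 := le_antisymm hple hpge
          set f : Fin dS → ℂ := fun s =>
            star (tens (Pi.single s 1) (w c₀)) ⬝ᵥ (ρSA *ᵥ tens (Pi.single s 1) (w c₀)) with hf
          have hfnn : ∀ s, 0 ≤ f s := fun s => hρSA.1.dotProduct_mulVec_nonneg _
          have htr : (condUnnorm w ρSA c₀).trace = ∑ s, f s := trace_condUnnorm w ρSA c₀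
          have hsum0 : (∑ s, f s) = 0 := by
            have hre : (∑ s, f s).re = 0 := by
              rw [← htr]
              exact hp0
            have hnn : 0 ≤ ∑ s, f s := Finset.sum_nonneg fun s _ => hfnn s
            have him := (Complex.nonneg_iff.mp hnn).2
            exact Complex.ext hre him.symm
          have hfs0 : ∀ s ∈ Finset.univ, f s = 0 :=
            (Finset.sum_eq_zero_iff_of_nonneg (fun s _ => hfnn s)).mp hsum0
          have hmv : ∀ s : Fin dS, ρSA *ᵥ tens (Pi.single s 1) (w c₀) = 0 := by
            intro s
            exact (hρSA.1.dotProduct_mulVec_zero_iff _).mp (hfs0 s (Finset.mem_univ s))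
          have hmv' : ρSA *ᵥ tens (rk l) (w c₀) = 0 := by
            rw [mulVec_tens]
            simp [hmv]
          rw [← hGdot]
          rw [hmv', dotProduct_zero]
      rw [hscale]
      have : star (((‖U‖ : ℝ) : ℂ) • (fun c => w c₀ c)) ⬝ᵥ
          (G *ᵥ (((‖U‖ : ℝ) : ℂ) • (fun c => w c₀ c))) =
          star ((‖U‖ : ℝ) : ℂ) * ((‖U‖ : ℝ) : ℂ) *
            (star (fun c => w c₀ c) ⬝ᵥ (G *ᵥ (fun c => w c₀ c))) := by
        rw [Matrix.mulVec_smul, star_smul, smul_dotProduct, dotProduct_smul]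
        simp [smul_eq_mul]
        ring
      rw [this, hzero, mul_zero]
  -- conclude G = 0 via the complex polarization identity
  have hT : ∀ x : EuclideanSpace ℂ (Fin dA), G *ᵥ x = 0 := by
    let T : EuclideanSpace ℂ (Fin dA) →ₗ[ℂ] EuclideanSpace ℂ (Fin dA) :=
      { toFun := fun v => (WithLp.equiv 2 (Fin dA → ℂ)).symm (G *ᵥ (WithLp.equiv 2 (Fin dA → ℂ)) v)
        map_add' := fun x y => by
          ext i; simp [Matrix.mulVec_add]
        map_smul' := fun c x => by
          ext i; simp [Matrix.mulVec_smul] }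
    have hTz : T = 0 := by
      rw [← inner_map_self_eq_zero]
      intro x
      have hx := key ((WithLp.equiv 2 (Fin dA → ℂ)) x)
      rw [PiLp.inner_apply]
      have : ∀ i, (inner ℂ (T x i) (x i) : ℂ) = star ((T x) i) * x i := by
        intro i; rw [RCLike.inner_apply']; rfl
      calc (∑ i, (inner ℂ (T x i) (x i) : ℂ))
          = ∑ i, star ((T x) i) * x i := Finset.sum_congr rfl fun i _ => this i
        _ = star (∑ i, star (x i) * (T x) i) := by
            rw [star_sum]
            exact Finset.sum_congr rfl fun i _ => by simp [mul_comm]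
        _ = 0 := by
            have : (∑ i, star (x i) * (T x) i) = 0 := by
              have := hx
              simpa [dotProduct, Pi.star_apply, T] using hx
            rw [this, star_zero]
    intro x
    have := LinearMap.congr_fun hTz x
    have h2 := congrArg (WithLp.equiv 2 (Fin dA → ℂ)) this
    simpa [T] using h2
  ext c d
  rw [Matrix.zero_apply]
  have h1 : G *ᵥ (Pi.single d 1) = 0 :=
    hT ((WithLp.equiv 2 (Fin dA → ℂ)).symm (Pi.single d 1))
  have h2 : (G *ᵥ Pi.single d 1) c = 0 := congrFun h1 c
  rw [← h2]
  simp [mulVec, dotProduct, Pi.single_apply, mul_ite]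

/-- Lemma 2: if all conditional states are diagonal with respect to a fixed
orthonormal basis `{|r_k⟩}` for every measurement basis of the ancilla, then
`ρ_SA = ∑ₖ |r_k⟩⟨r_k| ⊗ C^A_k` with `C^A_k` positive semidefinite. -/
theorem stmt2 {dS dA : ℕ}
    (ρSA : Matrix (Fin dS × Fin dA) (Fin dS × Fin dA) ℂ) (hρSA : IsDensity ρSA)
    (rk : Fin dS → Fin dS → ℂ) (hrk : ONFam rk)
    (hdiag : ∀ w : Fin dA → Fin dA → ℂ, ONFam w → ∀ a : Fin dA, 0 < prob w ρSA a →
      ∀ i j : Fin dS, i ≠ j → matElem (condState w ρSA a) (rk i) (rk j) = 0) :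
    ∃ C : Fin dS → Matrix (Fin dA) (Fin dA) ℂ,
      (∀ k, (C k).PosSemidef) ∧
      ρSA = ∑ k, ketbra (rk k) (rk k) ⊗ₖ C k := by
  classical
  have hH : ρSAᴴ = ρSA := hρSA.1.1
  have hstar : ∀ (s t : Fin dS) (a b : Fin dA),
      star (ρSA (s, b) (t, a)) = ρSA (t, a) (s, b) := by
    intro s t a b
    have := congrFun (congrFun hH (t, a)) (s, b)
    rw [Matrix.conjTranspose_apply] at this
    exact this
  refine ⟨fun k => Matrix.of fun a b => ∑ s, ∑ t, star (rk k s) * ρSA (s, a) (t, b) * rk k t,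
    ?_, ?_⟩
  · intro k
    refine Matrix.PosSemidef.of_dotProduct_mulVec_nonneg ?_ ?_
    · ext a b
      simp only [Matrix.conjTranspose_apply, Matrix.of_apply]
      calc star (∑ s, ∑ t, star (rk k s) * ρSA (s, b) (t, a) * rk k t)
          = ∑ s, ∑ t, rk k s * ρSA (t, a) (s, b) * star (rk k t) := by
            rw [star_sum]
            refine Finset.sum_congr rfl fun s _ => ?_
            rw [star_sum]
            refine Finset.sum_congr rfl fun t _ => ?_
            rw [star_mul', star_mul', star_star, hstar s t a b]
        _ = ∑ s, ∑ t, star (rk k s) * ρSA (s, a) (t, b) * rk k t := by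
            rw [Finset.sum_comm]
            exact Finset.sum_congr rfl fun t _ => Finset.sum_congr rfl fun s _ => by ring
    · intro x
      have hE : star x ⬝ᵥ ((Matrix.of fun a b =>
          ∑ s, ∑ t, star (rk k s) * ρSA (s, a) (t, b) * rk k t) *ᵥ x) =
          ∑ c, ∑ d, star (x c) * x d * (∑ s, ∑ t, star (rk k s) * ρSA (s, c) (t, d) * rk k t) := by
        simp only [dotProduct, mulVec, Pi.star_apply, Matrix.of_apply, Finset.mul_sum]
        refine Finset.sum_congr rfl fun c _ => Finset.sum_congr rfl fun d _ => ?_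
        simp only [Finset.sum_mul, Finset.mul_sum]
        exact Finset.sum_congr rfl fun u _ => Finset.sum_congr rfl fun t _ => by ring
      rw [hE, ← dot_tens]
      exact hρSA.1.dotProduct_mulVec_nonneg _
  · ext ⟨i, a⟩ ⟨j, b⟩
    have hGkl : ∀ k l, k ≠ l →
        (∑ s, ∑ t, star (rk k s) * ρSA (s, a) (t, b) * rk l t) = 0 := by
      intro k l hkl
      have := congrFun (congrFun (offdiag ρSA hρSA rk hdiag k l hkl) a) b
      simpa using this
    have hrhs : (∑ k, ketbra (rk k) (rk k) ⊗ₖ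
        (Matrix.of fun a b => ∑ s, ∑ t, star (rk k s) * ρSA (s, a) (t, b) * rk k t)) (i, a) (j, b)
        = ∑ k, rk k i * star (rk k j) *
            (∑ s, ∑ t, star (rk k s) * ρSA (s, a) (t, b) * rk k t) := by
      simp only [Matrix.sum_apply, Finset.sum_apply, Matrix.kroneckerMap_apply, ketbra,
        Matrix.vecMulVec_apply, Pi.star_apply, Matrix.of_apply]
    rw [hrhs]
    calc ρSA (i, a) (j, b)
        = ∑ s, ∑ t, (if i = s then 1 else 0) * ρSA (s, a) (t, b) *
            (if j = t then 1 else 0) := by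
          simp [ite_mul, mul_ite, Finset.sum_ite_eq, Finset.sum_ite_eq']
      _ = ∑ s, ∑ t, (∑ k, rk k i * star (rk k s)) * ρSA (s, a) (t, b) *
            (∑ l, star (rk l j) * rk l t) := by
          refine Finset.sum_congr rfl fun s _ => Finset.sum_congr rfl fun t _ => ?_
          rw [onfam_complete' hrk i s, onfam_complete hrk j t]
      _ = ∑ s, ∑ t, ∑ k, ∑ l, rk k i * star (rk l j) *
            (star (rk k s) * ρSA (s, a) (t, b) * rk l t) := by
          refine Finset.sum_congr rfl fun s _ => Finset.sum_congr rfl fun t _ => ?_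
          simp only [Finset.sum_mul, Finset.mul_sum]
          rw [Finset.sum_comm]
          exact Finset.sum_congr rfl fun k _ => Finset.sum_congr rfl fun l _ => by ring
      _ = ∑ k, ∑ l, ∑ s, ∑ t, rk k i * star (rk l j) *
            (star (rk k s) * ρSA (s, a) (t, b) * rk l t) := (sum4_reorder' _).symm
      _ = ∑ k, ∑ l, rk k i * star (rk l j) *
            (∑ s, ∑ t, star (rk k s) * ρSA (s, a) (t, b) * rk l t) := by
          refine Finset.sum_congr rfl fun k _ => Finset.sum_congr rfl fun l _ => ?_
          rw [Finset.mul_sum]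
          exact Finset.sum_congr rfl fun s _ => (Finset.mul_sum _ _ _).symm
      _ = ∑ k, rk k i * star (rk k j) *
            (∑ s, ∑ t, star (rk k s) * ρSA (s, a) (t, b) * rk k t) := by
          refine Finset.sum_congr rfl fun k _ => ?_
          refine Finset.sum_eq_single_of_mem k (Finset.mem_univ k) ?_
          intro l _ hlk
          rw [hGkl k l (Ne.symm hlk), mul_zero]
end Daemonic
end
end

section
/- For any utility function u : ℝ → ℝ, any parameter q ∈ ℝ, any bipartite density matrix ρ_SA on ℂ^{d_S} ⊗ ℂ^{d_A} and any orthonormal basis {|a⟩} of ℂ^{d_A}, the daemonic expected utility dominates the optimal expected utility of the reduced state: 𝓤_{{Π_a}}(ρ_SA) ≥ 𝓤(ρ_S) where ρ_S = Tr_A(ρ_SA); consequently the maximum daemonic gain satisfies δ𝓤(ρ_SA) ≥ 0. -/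
open Matrix BigOperators Finset Kronecker
open scoped ComplexOrder

noncomputable section

namespace Daemonic

section Helpers

variable {n : ℕ} {u : ℝ → ℝ} {q : ℝ} {ε : Fin n → ℝ} {v : Fin n → Fin n → ℂ}

lemma abs_le_one_of_unit {x : Fin n → ℂ} (hx : star x ⬝ᵥ x = 1) (p : Fin n) :
    ‖x p‖ ≤ 1 := by
  have h1 : ((∑ r, Complex.normSq (x r) : ℝ) : ℂ) = 1 := by
    rw [← hx]
    simp [dotProduct, Complex.normSq_eq_conj_mul_self]
  have h2 : ∑ r, Complex.normSq (x r) = 1 := by exact_mod_cast h1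
  have h3 : Complex.normSq (x p) ≤ 1 := by
    rw [← h2]
    exact Finset.single_le_sum (fun r _ => Complex.normSq_nonneg _) (Finset.mem_univ p)
  have h4 := Complex.sq_norm (x p)
  nlinarith [norm_nonneg (x p)]

lemma unitary_entry_le {U : Matrix (Fin n) (Fin n) ℂ}
    (hU : U ∈ Matrix.unitaryGroup (Fin n) ℂ) (p r : Fin n) : ‖U p r‖ ≤ 1 := by
  refine abs_le_one_of_unit (x := U p) ?_ r
  have h := congrFun (congrFun (Matrix.mem_unitaryGroup_iff.mp hU) p) p
  simpa [Matrix.mul_apply, Matrix.one_apply, dotProduct, Matrix.star_apply, mul_comm] using h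

lemma onfam_entry_le {v : Fin n → Fin n → ℂ} (hv : ONFam v) (i p : Fin n) :
    ‖v i p‖ ≤ 1 :=
  abs_le_one_of_unit (by simpa using hv i i) p

lemma abs_matElem_le {M : Matrix (Fin n) (Fin n) ℂ} {x y : Fin n → ℂ}
    (hx : ∀ p, ‖x p‖ ≤ 1) (hy : ∀ p, ‖y p‖ ≤ 1) :
    ‖matElem M x y‖ ≤ ∑ p, ∑ r, ‖M p r‖ := by
  rw [matElem, dotProduct]
  refine (norm_sum_le _ _).trans (Finset.sum_le_sum fun p _ => ?_)
  rw [norm_mul]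
  have h2 : ‖(M *ᵥ y) p‖ ≤ ∑ r, ‖M p r‖ := by
    rw [Matrix.mulVec, dotProduct]
    refine (norm_sum_le _ _).trans (Finset.sum_le_sum fun r _ => ?_)
    rw [norm_mul]
    calc ‖M p r‖ * ‖y r‖ ≤ ‖M p r‖ * 1 := by
          gcongr; exact hy r
      _ = _ := mul_one _
  calc ‖star (x p)‖ * ‖(M *ᵥ y) p‖
      ≤ 1 * (∑ r, ‖M p r‖) := by
        refine mul_le_mul ?_ h2 (norm_nonneg _) zero_le_one
        simpa using hx p
    _ = _ := one_mul _

lemma expUtil_zero (U : Matrix (Fin n) (Fin n) ℂ) : expUtil u q ε v 0 U = 0 := by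
  simp [expUtil, matElem]

lemma expUtil_add (ρ σ U : Matrix (Fin n) (Fin n) ℂ) :
    expUtil u q ε v (ρ + σ) U = expUtil u q ε v ρ U + expUtil u q ε v σ U := by
  simp only [expUtil, matElem, Matrix.add_mulVec, dotProduct_add, add_mul, Complex.add_re,
    ← Finset.sum_add_distrib]

lemma expUtil_sum {m : ℕ} (M : Fin m → Matrix (Fin n) (Fin n) ℂ)
    (U : Matrix (Fin n) (Fin n) ℂ) :
    expUtil u q ε v (∑ a, M a) U = ∑ a, expUtil u q ε v (M a) U := by
  let F : Matrix (Fin n) (Fin n) ℂ →+ ℝ :=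
    { toFun := fun ρ => expUtil u q ε v ρ U
      map_zero' := expUtil_zero U
      map_add' := fun ρ σ => expUtil_add ρ σ U }
  exact map_sum F M Finset.univ

lemma expUtil_real_smul (r : ℝ) (ρ U : Matrix (Fin n) (Fin n) ℂ) :
    expUtil u q ε v ((r : ℂ) • ρ) U = r * expUtil u q ε v ρ U := by
  simp only [expUtil, matElem, Matrix.smul_mulVec, dotProduct_smul, smul_eq_mul,
    mul_assoc, Complex.re_ofReal_mul, Finset.mul_sum]

lemma psd_trace_eq {M : Matrix (Fin n) (Fin n) ℂ} (hM : M.PosSemidef) :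
    ∃ t : ℝ, 0 ≤ t ∧ M.trace = (t : ℂ) ∧ (t = 0 → M = 0) := by
  obtain ⟨B, rfl⟩ : ∃ B : Matrix (Fin n) (Fin n) ℂ, M = Bᴴ * B := by
    open scoped MatrixOrder in exact CStarAlgebra.nonneg_iff_eq_star_mul_self.mp hM.nonneg
  refine ⟨∑ j, ∑ p, Complex.normSq (B p j), ?_, ?_, ?_⟩
  · exact Finset.sum_nonneg fun j _ => Finset.sum_nonneg fun p _ => Complex.normSq_nonneg _
  · rw [Matrix.trace]
    push_cast
    refine Finset.sum_congr rfl fun j _ => ?_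
    simp [Matrix.diag, Matrix.mul_apply, Matrix.conjTranspose_apply,
      Complex.normSq_eq_conj_mul_self]
  · intro h0
    have hB : B = 0 := by
      ext p j
      have h1 : ∀ j ∈ Finset.univ, (0:ℝ) ≤ ∑ p, Complex.normSq (B p j) := by
        intro j _; exact Finset.sum_nonneg fun p _ => Complex.normSq_nonneg _
      have h2 := (Finset.sum_eq_zero_iff_of_nonneg h1).mp h0 j (Finset.mem_univ j)
      have h3 := (Finset.sum_eq_zero_iff_of_nonneg
        (fun p _ => Complex.normSq_nonneg (B p j))).mp h2 p (Finset.mem_univ p)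
      simpa using Complex.normSq_eq_zero.mp h3
    rw [hB]; simp

variable {dS dA : ℕ}

lemma condUnnorm_posSemidef {ρSA : Matrix (Fin dS × Fin dA) (Fin dS × Fin dA) ℂ}
    (hρ : ρSA.PosSemidef) (w : Fin dA → Fin dA → ℂ) (a : Fin dA) :
    (condUnnorm w ρSA a).PosSemidef := by
  have heq : condUnnorm w ρSA a =
      (Matrix.of fun (i : Fin dS) (pc : Fin dS × Fin dA) =>
        if pc.1 = i then starRingEnd ℂ (w a pc.2) else 0) * ρSA *
      (Matrix.of fun (i : Fin dS) (pc : Fin dS × Fin dA) =>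
        if pc.1 = i then starRingEnd ℂ (w a pc.2) else 0)ᴴ := by
    ext i j
    simp only [condUnnorm, Matrix.of_apply, Matrix.mul_apply, Matrix.conjTranspose_apply,
      Fintype.sum_prod_type, apply_ite (star : ℂ → ℂ), star_zero, ite_mul, zero_mul,
      mul_ite, mul_zero, Finset.sum_ite_eq, Finset.sum_ite_eq', Finset.mem_univ, if_true]
    conv_rhs => rw [Finset.sum_comm]
    simp only [Finset.sum_ite_eq', Finset.mem_univ, if_true]
    have hinner : ∀ x1 : Fin dA,
        (∑ x2 : Fin dS, ∑ x3 : Fin dA,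
          if x2 = i then (starRingEnd ℂ) (w a x3) * ρSA (x2, x3) (j, x1) else 0) =
        ∑ x3, (starRingEnd ℂ) (w a x3) * ρSA (i, x3) (j, x1) := by
      intro x1; rw [Finset.sum_comm]; simp
    simp only [hinner]
    rw [Finset.sum_comm]
    refine Finset.sum_congr rfl fun d _ => ?_
    rw [Finset.sum_mul]
    refine Finset.sum_congr rfl fun c _ => ?_
    simp only [RCLike.star_def, Complex.conj_conj]
    ring
  rw [heq]
  exact hρ.mul_mul_conjTranspose_same _

lemma sum_condUnnorm {w : Fin dA → Fin dA → ℂ} (hw : ONFam w)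
    (ρSA : Matrix (Fin dS × Fin dA) (Fin dS × Fin dA) ℂ) :
    ∑ a, condUnnorm w ρSA a = ptraceA ρSA := by
  have hWW : (Matrix.of w) * (Matrix.of w)ᴴ = 1 := by
    ext a b
    have h := hw b a
    simp only [dotProduct, Pi.star_apply] at h
    simp only [Matrix.mul_apply, Matrix.conjTranspose_apply, Matrix.of_apply, Matrix.one_apply]
    have hif : (if a = b then (1:ℂ) else 0) = (if b = a then (1:ℂ) else 0) := by
      simp [eq_comm]
    rw [hif, ← h]
    exact Finset.sum_congr rfl fun d _ => mul_comm _ _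
  have hcol : ∀ c d : Fin dA, ∑ a, w a d * star (w a c) = if c = d then 1 else 0 := by
    have hWW' : (Matrix.of w)ᴴ * (Matrix.of w) = 1 := mul_eq_one_comm.mp hWW
    intro c d
    have h := congrFun (congrFun hWW' c) d
    simp only [Matrix.mul_apply, Matrix.conjTranspose_apply, Matrix.of_apply,
      Matrix.one_apply] at h
    rw [← h]
    exact Finset.sum_congr rfl fun a _ => mul_comm _ _
  ext i j
  simp only [Matrix.sum_apply, condUnnorm, ptraceA, Matrix.of_apply]
  rw [Finset.sum_comm]
  calc ∑ c, ∑ a, ∑ d, ρSA (i, c) (j, d) * (w a d * star (w a c))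
      = ∑ c, ∑ d, ρSA (i, c) (j, d) * (∑ a, w a d * star (w a c)) := by
        refine Finset.sum_congr rfl fun c _ => ?_
        rw [Finset.sum_comm]
        exact Finset.sum_congr rfl fun d _ => (Finset.mul_sum _ _ _).symm
    _ = ∑ c, ρSA (i, c) (j, c) := by
        refine Finset.sum_congr rfl fun c _ => ?_
        rw [Finset.sum_congr rfl fun d _ => by rw [hcol c d]]
        simp

lemma onfam_one : ONFam (fun a => (1 : Matrix (Fin dA) (Fin dA) ℂ) a) := by
  intro i j
  simp [dotProduct, Matrix.one_apply, apply_ite, eq_comm]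

/-- sum of absolute values of the entries -/
def entsum {n : ℕ} (M : Matrix (Fin n) (Fin n) ℂ) : ℝ := ∑ p, ∑ r, ‖M p r‖

/-- sum of absolute values of the utilities -/
def usum (u : ℝ → ℝ) (q : ℝ) {n : ℕ} (ε : Fin n → ℝ) : ℝ :=
  ∑ i, ∑ j, ∑ k, |u (q * ε i + (1 - q) * ε j - ε k)|

lemma entsum_nonneg (M : Matrix (Fin n) (Fin n) ℂ) : 0 ≤ entsum M :=
  Finset.sum_nonneg fun p _ => Finset.sum_nonneg fun r _ => norm_nonneg _

lemma usum_nonneg : 0 ≤ usum u q ε :=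
  Finset.sum_nonneg fun _ _ => Finset.sum_nonneg fun _ _ =>
    Finset.sum_nonneg fun _ _ => abs_nonneg _

lemma expUtil_le_bound (hv : ONFam v) (M : Matrix (Fin n) (Fin n) ℂ)
    {U : Matrix (Fin n) (Fin n) ℂ} (hU : U ∈ Matrix.unitaryGroup (Fin n) ℂ) :
    expUtil u q ε v M U ≤ entsum M * (n:ℝ)^2 * (n:ℝ)^2 * usum u q ε := by
  have hvb : ∀ i p, ‖v i p‖ ≤ 1 := fun i => onfam_entry_le hv i
  have hUb : ∀ p r, ‖U p r‖ ≤ 1 := unitary_entry_le hU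
  have hUHb : ∀ p r, ‖Uᴴ p r‖ ≤ 1 := by
    intro p r; simpa [Matrix.conjTranspose_apply] using hUb r p
  have hU2 : ∑ p, ∑ r, ‖U p r‖ ≤ (n:ℝ)^2 := by
    calc ∑ p, ∑ r, ‖U p r‖ ≤ ∑ _p : Fin n, ∑ _r : Fin n, (1:ℝ) :=
          Finset.sum_le_sum fun p _ => Finset.sum_le_sum fun r _ => hUb p r
      _ = (n:ℝ)^2 := by simp [sq]
  have hUH2 : ∑ p, ∑ r, ‖Uᴴ p r‖ ≤ (n:ℝ)^2 := by
    calc ∑ p, ∑ r, ‖Uᴴ p r‖ ≤ ∑ _p : Fin n, ∑ _r : Fin n, (1:ℝ) :=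
          Finset.sum_le_sum fun p _ => Finset.sum_le_sum fun r _ => hUHb p r
      _ = (n:ℝ)^2 := by simp [sq]
  have key : ∀ i j k : Fin n,
      (matElem M (v i) (v j) * matElem Uᴴ (v j) (v k) * matElem U (v k) (v i)).re *
        u (q * ε i + (1 - q) * ε j - ε k)
      ≤ entsum M * (n:ℝ)^2 * (n:ℝ)^2 * |u (q * ε i + (1 - q) * ε j - ε k)| := by
    intro i j k
    have b1 : ‖matElem M (v i) (v j)‖ ≤ entsum M :=
      abs_matElem_le (hvb i) (hvb j)
    have b2 : ‖matElem Uᴴ (v j) (v k)‖ ≤ (n:ℝ)^2 :=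
      (abs_matElem_le (hvb j) (hvb k)).trans hUH2
    have b3 : ‖matElem U (v k) (v i)‖ ≤ (n:ℝ)^2 :=
      (abs_matElem_le (hvb k) (hvb i)).trans hU2
    set z := matElem M (v i) (v j) * matElem Uᴴ (v j) (v k) * matElem U (v k) (v i) with hz
    set uu := u (q * ε i + (1 - q) * ε j - ε k) with huu
    calc z.re * uu ≤ |z.re * uu| := le_abs_self _
      _ = |z.re| * |uu| := abs_mul _ _
      _ ≤ ‖z‖ * |uu| := by
          gcongr
          exact Complex.abs_re_le_norm z
      _ = ‖matElem M (v i) (v j)‖ * ‖matElem Uᴴ (v j) (v k)‖ *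
            ‖matElem U (v k) (v i)‖ * |uu| := by
          rw [hz, norm_mul, norm_mul]
      _ ≤ entsum M * (n:ℝ)^2 * (n:ℝ)^2 * |uu| := by
          gcongr <;> first
            | exact norm_nonneg _
            | exact entsum_nonneg M
            | exact mul_nonneg (entsum_nonneg M) (sq_nonneg _)
            | positivity
            | assumption
  calc expUtil u q ε v M U
      ≤ ∑ i, ∑ j, ∑ k, entsum M * (n:ℝ)^2 * (n:ℝ)^2 *
          |u (q * ε i + (1 - q) * ε j - ε k)| := by
        refine Finset.sum_le_sum fun i _ => Finset.sum_le_sum fun j _ =>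
          Finset.sum_le_sum fun k _ => key i j k
    _ = entsum M * (n:ℝ)^2 * (n:ℝ)^2 * usum u q ε := by
        simp [usum, Finset.mul_sum]

instance : Nonempty (Matrix.unitaryGroup (Fin n) ℂ) := ⟨1⟩

lemma optUtil_le_bound (hv : ONFam v) (M : Matrix (Fin n) (Fin n) ℂ) :
    optUtil u q ε v M ≤ entsum M * (n:ℝ)^2 * (n:ℝ)^2 * usum u q ε :=
  ciSup_le fun U => expUtil_le_bound hv M U.2

lemma bddAbove_expUtil (hv : ONFam v) (M : Matrix (Fin n) (Fin n) ℂ) :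
    BddAbove (Set.range fun U : Matrix.unitaryGroup (Fin n) ℂ =>
      expUtil u q ε v M (U : Matrix (Fin n) (Fin n) ℂ)) := by
  refine ⟨entsum M * (n:ℝ)^2 * (n:ℝ)^2 * usum u q ε, ?_⟩
  rintro x ⟨U, rfl⟩
  exact expUtil_le_bound hv M U.2

lemma expUtil_condUnnorm_le {v : Fin dS → Fin dS → ℂ} (hv : ONFam v)
    {ρSA : Matrix (Fin dS × Fin dA) (Fin dS × Fin dA) ℂ} (hρ : ρSA.PosSemidef)
    (w : Fin dA → Fin dA → ℂ) (a : Fin dA) {U : Matrix (Fin dS) (Fin dS) ℂ}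
    (hU : U ∈ Matrix.unitaryGroup (Fin dS) ℂ) {u : ℝ → ℝ} {q : ℝ} {ε : Fin dS → ℝ} :
    expUtil u q ε v (condUnnorm w ρSA a) U ≤
      prob w ρSA a * optUtil u q ε v (condState w ρSA a) := by
  obtain ⟨t, ht0, htr, hzero⟩ := psd_trace_eq (condUnnorm_posSemidef hρ w a)
  have hpt : prob w ρSA a = t := by simp [prob, htr]
  rcases eq_or_lt_of_le ht0 with h0 | hpos
  · have hz : condUnnorm w ρSA a = 0 := hzero h0.symm
    rw [hz, expUtil_zero, hpt, ← h0, zero_mul]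
  · have hne : prob w ρSA a ≠ 0 := by rw [hpt]; exact hpos.ne'
    have hrel : condUnnorm w ρSA a = ((prob w ρSA a : ℝ) : ℂ) • condState w ρSA a := by
      rw [condState, smul_smul, mul_inv_cancel₀ (by exact_mod_cast hne), one_smul]
    rw [hrel, expUtil_real_smul]
    have hle : expUtil u q ε v (condState w ρSA a) U ≤
        optUtil u q ε v (condState w ρSA a) :=
      le_ciSup (bddAbove_expUtil hv _) (⟨U, hU⟩ : Matrix.unitaryGroup (Fin dS) ℂ)
    exact mul_le_mul_of_nonneg_left hle (hpt ▸ ht0)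

/-- Main inequality: part 1 of statement 7, for an arbitrary orthonormal basis. -/
lemma main_ineq (u : ℝ → ℝ) (q : ℝ) (ε : Fin dS → ℝ) {v : Fin dS → Fin dS → ℂ}
    (hv : ONFam v) {ρSA : Matrix (Fin dS × Fin dA) (Fin dS × Fin dA) ℂ}
    (hρ : ρSA.PosSemidef) {w : Fin dA → Fin dA → ℂ} (hw : ONFam w) :
    optUtil u q ε v (ptraceA ρSA) ≤ daemonicUtil u q ε v w ρSA := by
  refine ciSup_le fun U => ?_
  have h1 : expUtil u q ε v (ptraceA ρSA) U = ∑ a, expUtil u q ε v (condUnnorm w ρSA a) U := by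
    rw [← sum_condUnnorm hw, expUtil_sum]
  rw [h1]
  exact Finset.sum_le_sum fun a _ => expUtil_condUnnorm_le hv hρ w a U.2

/-- sum of absolute values of all entries of the bipartite state -/
def bigR {dS dA : ℕ} (ρSA : Matrix (Fin dS × Fin dA) (Fin dS × Fin dA) ℂ) : ℝ :=
  ∑ p, ∑ r, ∑ c, ∑ d, ‖ρSA (p, c) (r, d)‖

lemma bigR_nonneg (ρSA : Matrix (Fin dS × Fin dA) (Fin dS × Fin dA) ℂ) : 0 ≤ bigR ρSA :=
  Finset.sum_nonneg fun _ _ => Finset.sum_nonneg fun _ _ =>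
    Finset.sum_nonneg fun _ _ => Finset.sum_nonneg fun _ _ => norm_nonneg _

lemma entsum_condUnnorm_le {ρSA : Matrix (Fin dS × Fin dA) (Fin dS × Fin dA) ℂ}
    {w : Fin dA → Fin dA → ℂ} {a : Fin dA} (hwb : ∀ c, ‖w a c‖ ≤ 1) :
    entsum (condUnnorm w ρSA a) ≤ bigR ρSA := by
  refine Finset.sum_le_sum fun p _ => Finset.sum_le_sum fun r _ => ?_
  simp only [condUnnorm, Matrix.of_apply]
  calc ‖∑ c, ∑ d, ρSA (p, c) (r, d) * (w a d * star (w a c))‖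
      ≤ ∑ c, ‖∑ d, ρSA (p, c) (r, d) * (w a d * star (w a c))‖ :=
        norm_sum_le _ _
    _ ≤ ∑ c, ∑ d, ‖ρSA (p, c) (r, d)‖ := by
        refine Finset.sum_le_sum fun c _ => (norm_sum_le _ _).trans
          (Finset.sum_le_sum fun d _ => ?_)
        rw [norm_mul, norm_mul]
        have hb1 : ‖w a d‖ ≤ 1 := hwb d
        have hb2 : ‖star (w a c)‖ ≤ 1 := by simpa using hwb c
        calc ‖ρSA (p, c) (r, d)‖ *
              (‖w a d‖ * ‖star (w a c)‖)
            ≤ ‖ρSA (p, c) (r, d)‖ * (1 * 1) :=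
              mul_le_mul_of_nonneg_left
                (mul_le_mul hb1 hb2 (norm_nonneg _) zero_le_one)
                (norm_nonneg _)
          _ = ‖ρSA (p, c) (r, d)‖ := by ring

lemma prob_mul_optUtil_le {v : Fin dS → Fin dS → ℂ} (hv : ONFam v)
    {ρSA : Matrix (Fin dS × Fin dA) (Fin dS × Fin dA) ℂ} (hρ : ρSA.PosSemidef)
    {w : Fin dA → Fin dA → ℂ} (hwb : ∀ a c, ‖w a c‖ ≤ 1) (a : Fin dA)
    {u : ℝ → ℝ} {q : ℝ} {ε : Fin dS → ℝ} :
    prob w ρSA a * optUtil u q ε v (condState w ρSA a) ≤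
      bigR ρSA * (dS:ℝ)^2 * (dS:ℝ)^2 * usum u q ε := by
  set C := bigR ρSA * (dS:ℝ)^2 * (dS:ℝ)^2 * usum u q ε with hC
  have hC0 : 0 ≤ C := by
    have := bigR_nonneg ρSA
    have := usum_nonneg (u := u) (q := q) (ε := ε)
    positivity
  obtain ⟨t, ht0, htr, hzero⟩ := psd_trace_eq (condUnnorm_posSemidef hρ w a)
  have hpt : prob w ρSA a = t := by simp [prob, htr]
  rcases eq_or_lt_of_le ht0 with h0 | hpos
  · rw [hpt, ← h0, zero_mul]; exact hC0
  · have hne : prob w ρSA a ≠ 0 := by rw [hpt]; exact hpos.ne'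
    have hrel : condUnnorm w ρSA a = ((prob w ρSA a : ℝ) : ℂ) • condState w ρSA a := by
      rw [condState, smul_smul, mul_inv_cancel₀ (by exact_mod_cast hne), one_smul]
    have h1 : ∀ U : Matrix.unitaryGroup (Fin dS) ℂ,
        expUtil u q ε v (condState w ρSA a) (U : Matrix (Fin dS) (Fin dS) ℂ) ≤ C / t := by
      intro U
      rw [le_div_iff₀ hpos]
      have h2 : expUtil u q ε v (condState w ρSA a) (U : Matrix (Fin dS) (Fin dS) ℂ) * t =
          expUtil u q ε v (condUnnorm w ρSA a) (U : Matrix (Fin dS) (Fin dS) ℂ) := by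
        rw [hrel, hpt, expUtil_real_smul, mul_comm]
      rw [h2]
      calc expUtil u q ε v (condUnnorm w ρSA a) (U : Matrix (Fin dS) (Fin dS) ℂ)
          ≤ entsum (condUnnorm w ρSA a) * (dS:ℝ)^2 * (dS:ℝ)^2 * usum u q ε :=
            expUtil_le_bound hv _ U.2
        _ ≤ C := by
            rw [hC]
            gcongr ?_ * _ * _ * _
            · exact usum_nonneg
            · exact entsum_condUnnorm_le (hwb a)
    have h3 : optUtil u q ε v (condState w ρSA a) ≤ C / t := ciSup_le h1
    calc prob w ρSA a * optUtil u q ε v (condState w ρSA a)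
        ≤ t * (C / t) := by
          rw [hpt]
          exact mul_le_mul_of_nonneg_left h3 ht0
      _ = C := by
          rw [mul_comm, div_mul_cancel₀ C hpos.ne']

lemma daemonicUtil_le_bound {v : Fin dS → Fin dS → ℂ} (hv : ONFam v)
    {ρSA : Matrix (Fin dS × Fin dA) (Fin dS × Fin dA) ℂ} (hρ : ρSA.PosSemidef)
    {w : Fin dA → Fin dA → ℂ} (hwb : ∀ a c, ‖w a c‖ ≤ 1)
    {u : ℝ → ℝ} {q : ℝ} {ε : Fin dS → ℝ} :
    daemonicUtil u q ε v w ρSA ≤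
      (dA:ℝ) * (bigR ρSA * (dS:ℝ)^2 * (dS:ℝ)^2 * usum u q ε) := by
  calc daemonicUtil u q ε v w ρSA
      ≤ ∑ _a : Fin dA, bigR ρSA * (dS:ℝ)^2 * (dS:ℝ)^2 * usum u q ε :=
        Finset.sum_le_sum fun a _ => prob_mul_optUtil_le hv hρ hwb a
    _ = (dA:ℝ) * (bigR ρSA * (dS:ℝ)^2 * (dS:ℝ)^2 * usum u q ε) := by
        simp [Finset.sum_const, mul_comm]

end Helpers

/-- the daemonic expected utility dominates the optimal expected utility of the
reduced state, `𝓤_{{Π_a}}(ρ_SA) ≥ 𝓤(ρ_S)`; consequently `δ𝓤(ρ_SA) ≥ 0`. -/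
theorem stmt7 {dS dA : ℕ} (u : ℝ → ℝ) (q : ℝ)
    (ε : Fin dS → ℝ) (hε : StrictMono ε)
    (v : Fin dS → Fin dS → ℂ) (hv : ONFam v)
    (ρSA : Matrix (Fin dS × Fin dA) (Fin dS × Fin dA) ℂ) (hρSA : IsDensity ρSA)
    (w : Fin dA → Fin dA → ℂ) (hw : ONFam w) :
    optUtil u q ε v (ptraceA ρSA) ≤ daemonicUtil u q ε v w ρSA ∧
    0 ≤ daemonicGain u q ε v ρSA := by
  have hρ := hρSA.1
  have part1 := main_ineq u q ε hv hρ hw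
  refine ⟨part1, ?_⟩
  rw [daemonicGain, sub_nonneg]
  have hbdd : BddAbove (Set.range fun V : Matrix.unitaryGroup (Fin dA) ℂ =>
      daemonicUtil u q ε v (fun a => (V : Matrix (Fin dA) (Fin dA) ℂ) a) ρSA) := by
    refine ⟨(dA:ℝ) * (bigR ρSA * (dS:ℝ)^2 * (dS:ℝ)^2 * usum u q ε), ?_⟩
    rintro x ⟨V, rfl⟩
    exact daemonicUtil_le_bound hv hρ (fun a c => unitary_entry_le V.2 a c)
  have h2 := le_ciSup hbdd (1 : Matrix.unitaryGroup (Fin dA) ℂ)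
  exact le_trans (main_ineq u q ε hv hρ onfam_one) h2
end Daemonic
end
end
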